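/- (Proposition C.1, efficiency of the rejection sampler.) Suppose x* ∈ argmin_{y ∈ ℝ^d} V(y) and that V satisfies V(x) − V(x*) ≤ (L/2)‖x − x*‖² for all x ∈ ℝ^d and some L > 0 (Assumption 2). For t > 0 and x ∈ ℝ^d, the acceptance probability of one proposal of the rejection sampler, A(t, x) = ∫_{ℝ^d} exp(−V(z) + V(x*)) dN(e^{t}x, (e^{2t} − 1) I_d)(z), satisfies A(t, x) ≥ (L(e^{2t} − 1) + 1)^{−d/2} exp( −(L/2) ‖x* − e^{t}x‖² / (L(e^{2t} − 1) + 1) ). Consequently, the expected number of proposals needed to obtain n accepted samples from p_{0|t}(·|x) is at most n (L(e^{2t} − 1) + 1)^{d/2} exp( (L/2) ‖x* − e^{t}x‖² / (L(e^{2t} − 1) + 1) ). -/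

import Mathlib

open MeasureTheory Real
open scoped ENNReal RealInnerProductSpace

noncomputable section

/-- `ℝ^d` as a Euclidean space. -/
abbrev Euc (d : ℕ) := EuclideanSpace ℝ (Fin d)

/-- The standard Gaussian measure `γ^d` on `ℝ^d`. -/
def stdGaussian (d : ℕ) : Measure (Euc d) :=
  volume.withDensity fun x => ENNReal.ofReal ((2 * π) ^ (-(d : ℝ) / 2) * exp (-‖x‖ ^ 2 / 2))

/-- The unnormalized measure with density `exp (-V)` with respect to Lebesgue measure. -/
def gibbs (d : ℕ) (V : Euc d → ℝ) : Measure (Euc d) :=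
  volume.withDensity fun x => ENNReal.ofReal (exp (-V x))

/-- The time-`t` marginal `p_t` of the OU process `dX_t = -X_t dt + √2 dB_t` started at `p`,
i.e. the law of `e^{-t} X_0 + √(1-e^{-2t}) Z` with `X_0 ∼ p`, `Z ∼ γ^d` independent. -/
def ouMarginal (d : ℕ) (p : Measure (Euc d)) (t : ℝ) : Measure (Euc d) :=
  (p.prod (stdGaussian d)).map fun xz =>
    exp (-t) • xz.1 + Real.sqrt (1 - exp (-2 * t)) • xz.2

/-- The (smooth, positive) density of `p_t`. -/
def ouDensity (d : ℕ) (p : Measure (Euc d)) (t : ℝ) (x : Euc d) : ℝ :=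
  (2 * π * (1 - exp (-2 * t))) ^ (-(d : ℝ) / 2) *
    ∫ z, exp (-‖x - exp (-t) • z‖ ^ 2 / (2 * (1 - exp (-2 * t)))) ∂p

/-- The score `∇ ln p_t`. -/
def score (d : ℕ) (p : Measure (Euc d)) (t : ℝ) (x : Euc d) : Euc d :=
  gradient (fun y => Real.log (ouDensity d p t y)) x

/-- The conditional law `p_{0|t}(·|x)` of `X_0` given `X_t = x`, with density (w.r.t. `p`)
proportional to `z ↦ exp (-‖x - e^{-t} z‖² / (2 (1 - e^{-2t})))`. -/
def posterior (d : ℕ) (p : Measure (Euc d)) (t : ℝ) (x : Euc d) : Measure (Euc d) :=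
  ((p.withDensity fun z =>
      ENNReal.ofReal (exp (-‖x - exp (-t) • z‖ ^ 2 / (2 * (1 - exp (-2 * t)))))) Set.univ)⁻¹ •
    (p.withDensity fun z =>
      ENNReal.ofReal (exp (-‖x - exp (-t) • z‖ ^ 2 / (2 * (1 - exp (-2 * t))))))

/-- Kullback–Leibler divergence `KL(μ ‖ ν) = ∫ log (dμ/dν) dμ`. -/
def KLdiv {α : Type*} [MeasurableSpace α] (μ ν : Measure α) : ℝ :=
  ∫ x, Real.log ((μ.rnDeriv ν x).toReal) ∂μ

/-- Mean of the posterior `p_{0|t}(·|x)`. -/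
def postMean (d : ℕ) (p : Measure (Euc d)) (t : ℝ) (x : Euc d) : Euc d :=
  ∫ z, z ∂(posterior d p t x)

/-- Trace of the covariance matrix of the posterior `p_{0|t}(·|x)`. -/
def postTrCov (d : ℕ) (p : Measure (Euc d)) (t : ℝ) (x : Euc d) : ℝ :=
  ∫ z, ‖z - postMean d p t x‖ ^ 2 ∂(posterior d p t x)

/-- The Gaussian measure `N(m, s2 • I_d)` on `ℝ^d`, i.e. the law of `m + √s2 • Z`,
`Z ∼ γ^d`. -/
def gaussianPi (d : ℕ) (m : Euc d) (s2 : ℝ) : Measure (Euc d) :=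
  (stdGaussian d).map fun z => m + Real.sqrt s2 • z

lemma integrable_rexp_neg_mul_sq_norm {d : ℕ} {b : ℝ} (hb : 0 < b) :
    Integrable (fun v : Euc d => rexp (-b * ‖v‖ ^ 2)) := by
  have h := GaussianFourier.integrable_cexp_neg_mul_sq_norm_add (V := Euc d)
      (b := (b : ℂ)) (by simpa) 0 0
  have h2 := h.re
  refine h2.congr (Filter.Eventually.of_forall fun v => ?_)
  have e : (-(b : ℂ) * (‖v‖ : ℂ) ^ 2 + 0 * ((inner ℝ (0 : Euc d) v : ℝ) : ℂ))
      = ((-b * ‖v‖ ^ 2 : ℝ) : ℂ) := by push_cast; ring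
  show RCLike.re (Complex.exp _) = _
  rw [e, RCLike.re_to_complex, Complex.exp_ofReal_re]

lemma integral_rexp_neg_norm_sq {d : ℕ} {b : ℝ} (hb : 0 < b) :
    ∫ v : Euc d, rexp (-b * ‖v‖ ^ 2) = (π / b) ^ ((d : ℝ) / 2) := by
  rw [GaussianFourier.integral_rexp_neg_mul_sq_norm hb]
  norm_num [finrank_euclideanSpace]

lemma integral_rexp_neg_norm_sq_shift {d : ℕ} {b : ℝ} (hb : 0 < b) (μ0 : Euc d) :
    ∫ v : Euc d, rexp (-b * ‖v - μ0‖ ^ 2) = (π / b) ^ ((d : ℝ) / 2) := by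
  rw [integral_sub_right_eq_self (fun v : Euc d => rexp (-b * ‖v‖ ^ 2)) μ0]
  exact integral_rexp_neg_norm_sq hb

lemma integral_stdGaussian {d : ℕ} (g : Euc d → ℝ) :
    ∫ z, g z ∂(stdGaussian d)
      = ∫ z, ((2 * π) ^ (-(d : ℝ) / 2) * rexp (-‖z‖ ^ 2 / 2)) * g z := by
  have hcont : Continuous fun z : Euc d => (2 * π) ^ (-(d : ℝ) / 2) * rexp (-‖z‖ ^ 2 / 2) := by
    continuity
  rw [stdGaussian]
  simp_rw [ENNReal.ofReal]
  rw [integral_withDensity_eq_integral_smul hcont.measurable.real_toNNReal g]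
  congr 1
  ext z
  rw [NNReal.smul_def, Real.coe_toNNReal _ (by positivity), smul_eq_mul]

instance stdGaussian_isProb (d : ℕ) : IsProbabilityMeasure (stdGaussian d) := by
  constructor
  rw [stdGaussian, withDensity_apply _ MeasurableSet.univ, Measure.restrict_univ]
  have hint : Integrable (fun z : Euc d => (2 * π) ^ (-(d : ℝ) / 2) * rexp (-‖z‖ ^ 2 / 2)) := by
    have := (integrable_rexp_neg_mul_sq_norm (d := d) (b := (1:ℝ)/2) (by norm_num)).const_mul
      ((2 * π) ^ (-(d : ℝ) / 2) : ℝ)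
    refine this.congr (Filter.Eventually.of_forall fun v => ?_)
    ring_nf
  rw [← ofReal_integral_eq_lintegral_ofReal hint
    (Filter.Eventually.of_forall fun z => by positivity)]
  rw [integral_const_mul]
  have : ∫ z : Euc d, rexp (-‖z‖ ^ 2 / 2) = (2 * π) ^ ((d : ℝ) / 2) := by
    have h := integral_rexp_neg_norm_sq (d := d) (b := (1:ℝ)/2) (by norm_num)
    rw [show π / ((1:ℝ)/2) = 2 * π by ring] at h
    rw [← h]
    congr 1 with z
    ring_nf
  rw [this, ← Real.rpow_add (by positivity),
    show (-(d:ℝ)/2 + (d:ℝ)/2) = 0 by ring, Real.rpow_zero, ENNReal.ofReal_one]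

/-- **Proposition C.1 (efficiency of the rejection sampler).**
If `x*` minimizes `V` and `V(x) - V(x*) ≤ (L/2) ‖x - x*‖²`, then the acceptance probability
`A(t,x) = ∫ exp(-V z + V x*) dN(e^t x, (e^{2t}-1) I_d)(z)` of one proposal satisfies
`A(t,x) ≥ (L(e^{2t}-1)+1)^{-d/2} exp(-(L/2)‖x* - e^t x‖²/(L(e^{2t}-1)+1))`, and hence the
expected number `n / A(t,x)` of proposals needed for `n` accepted samples is at most
`n (L(e^{2t}-1)+1)^{d/2} exp((L/2)‖x* - e^t x‖²/(L(e^{2t}-1)+1))`. -/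
theorem rejection_sampler_efficiency
    (d : ℕ) (hd : 1 ≤ d) (V : Euc d → ℝ) (hV : Measurable V)
    (L : ℝ) (hL : 0 < L) (xstar : Euc d)
    (hmin : ∀ y : Euc d, V xstar ≤ V y)
    (hgrowth : ∀ x : Euc d, V x - V xstar ≤ L / 2 * ‖x - xstar‖ ^ 2)
    (t : ℝ) (ht : 0 < t) (x : Euc d) (n : ℕ) (hn : 0 < n) :
    (L * (exp (2 * t) - 1) + 1) ^ (-(d : ℝ) / 2) *
        exp (-(L / 2) * ‖xstar - exp t • x‖ ^ 2 / (L * (exp (2 * t) - 1) + 1)) ≤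
      (∫ z, exp (-V z + V xstar) ∂(gaussianPi d (exp t • x) (exp (2 * t) - 1))) ∧
    (n : ℝ) / (∫ z, exp (-V z + V xstar) ∂(gaussianPi d (exp t • x) (exp (2 * t) - 1))) ≤
      (n : ℝ) * ((L * (exp (2 * t) - 1) + 1) ^ ((d : ℝ) / 2) *
        exp (L / 2 * ‖xstar - exp t • x‖ ^ 2 / (L * (exp (2 * t) - 1) + 1))) := by
  have hs2 : 0 < exp (2 * t) - 1 := by
    rw [sub_pos, ← Real.exp_zero]
    exact Real.exp_lt_exp.mpr (by linarith)
  set s2 : ℝ := exp (2 * t) - 1 with hs2def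
  set s : ℝ := Real.sqrt s2 with hsdef
  have hs_pos : 0 < s := Real.sqrt_pos.mpr hs2
  have hs_sq : s ^ 2 = s2 := Real.sq_sqrt hs2.le
  set m : Euc d := exp t • x with hmdef
  set a : Euc d := xstar - m with hadef
  set C : ℝ := L * s2 + 1 with hCdef
  have hC : 0 < C := by nlinarith
  have hCne : L * s ^ 2 + 1 ≠ 0 := by rw [hs_sq]; rw [hCdef] at hC; positivity
  set μ0 : Euc d := (L * s / C) • a with hmudef
  have hmap_meas : Measurable fun z : Euc d => m + s • z :=
    (measurable_id.const_smul s).const_add m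
  have hprob : IsProbabilityMeasure (gaussianPi d m s2) := by
    rw [gaussianPi, ← hsdef]
    exact Measure.isProbabilityMeasure_map hmap_meas.aemeasurable
  have hAm : Measurable fun z : Euc d => rexp (-V z + V xstar) :=
    Real.measurable_exp.comp ((hV.neg).add_const _)
  have hBcont : Continuous fun z : Euc d => rexp (-(L/2) * ‖z - xstar‖ ^ 2) := by
    continuity
  have hAint : Integrable (fun z => rexp (-V z + V xstar)) (gaussianPi d m s2) := by
    refine Integrable.mono' (integrable_const 1) hAm.aestronglyMeasurable ?_
    filter_upwards with z
    rw [Real.norm_eq_abs, abs_of_pos (Real.exp_pos _), ← Real.exp_zero]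
    exact Real.exp_le_exp.mpr (by linarith [hmin z])
  have hBint : Integrable (fun z => rexp (-(L/2) * ‖z - xstar‖ ^ 2)) (gaussianPi d m s2) := by
    refine Integrable.mono' (integrable_const 1) hBcont.measurable.aestronglyMeasurable ?_
    filter_upwards with z
    rw [Real.norm_eq_abs, abs_of_pos (Real.exp_pos _), ← Real.exp_zero]
    refine Real.exp_le_exp.mpr ?_
    have : (0:ℝ) ≤ L / 2 * ‖z - xstar‖ ^ 2 := by positivity
    linarith
  have hmono : ∫ z, rexp (-(L/2) * ‖z - xstar‖ ^ 2) ∂(gaussianPi d m s2)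
      ≤ ∫ z, rexp (-V z + V xstar) ∂(gaussianPi d m s2) := by
    refine integral_mono hBint hAint fun z => Real.exp_le_exp.mpr ?_
    have := hgrowth z
    linarith
  have hBeq : ∫ z, rexp (-(L/2) * ‖z - xstar‖ ^ 2) ∂(gaussianPi d m s2)
      = C ^ (-(d : ℝ) / 2) * rexp (-(L / 2) * ‖a‖ ^ 2 / C) := by
    rw [gaussianPi, ← hsdef,
      integral_map hmap_meas.aemeasurable hBcont.measurable.aestronglyMeasurable,
      integral_stdGaussian]
    have key : ∀ w : Euc d,
        ((2 * π) ^ (-(d : ℝ) / 2) * rexp (-‖w‖ ^ 2 / 2)) * rexp (-(L/2) * ‖(m + s • w) - xstar‖ ^ 2)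
          = ((2 * π) ^ (-(d : ℝ) / 2) * rexp (-(L / 2) * ‖a‖ ^ 2 / C)) *
              rexp (-(C/2) * ‖w - μ0‖ ^ 2) := by
      intro w
      have hw : (m + s • w) - xstar = s • w - a := by rw [hadef]; abel
      rw [hw, mul_assoc, mul_assoc, ← Real.exp_add, ← Real.exp_add]
      congr 2
      have e1 : ‖s • w - a‖ ^ 2 = s ^ 2 * ‖w‖ ^ 2 - 2 * (s * ⟪w, a⟫) + ‖a‖ ^ 2 := by
        rw [norm_sub_sq_real, real_inner_smul_left, norm_smul, Real.norm_eq_abs, mul_pow, sq_abs]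
      have e2 : ‖w - μ0‖ ^ 2
          = ‖w‖ ^ 2 - 2 * ((L * s / C) * ⟪w, a⟫) + (L * s / C) ^ 2 * ‖a‖ ^ 2 := by
        rw [hmudef, norm_sub_sq_real, real_inner_smul_right, norm_smul, Real.norm_eq_abs,
          mul_pow, sq_abs]
      rw [e1, e2, hCdef, ← hs_sq]
      field_simp
      ring
    rw [integral_congr_ae (Filter.Eventually.of_forall key), integral_const_mul,
      integral_rexp_neg_norm_sq_shift (by positivity) μ0]
    rw [show π / (C / 2) = 2 * π / C by field_simp,
      Real.div_rpow (by positivity) hC.le]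
    have hpow : (2 * π) ^ (-(d:ℝ)/2) * ((2 * π) ^ ((d:ℝ)/2) / C ^ ((d:ℝ)/2))
        = C ^ (-(d:ℝ)/2) := by
      rw [mul_div_assoc', ← Real.rpow_add (by positivity),
        show (-(d:ℝ)/2 + (d:ℝ)/2) = 0 by ring, Real.rpow_zero, one_div,
        ← Real.rpow_neg hC.le, neg_div]
    rw [mul_comm ((2 * π) ^ (-(d:ℝ)/2)) (rexp (-(L / 2) * ‖a‖ ^ 2 / C)), mul_assoc, hpow,
      mul_comm]
  constructor
  · rw [← hBeq]; exact hmono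
  · have hT : 0 < C ^ (-(d : ℝ) / 2) * rexp (-(L / 2) * ‖a‖ ^ 2 / C) := by positivity
    have hTA : C ^ (-(d : ℝ) / 2) * rexp (-(L / 2) * ‖a‖ ^ 2 / C)
        ≤ ∫ z, rexp (-V z + V xstar) ∂(gaussianPi d m s2) := by rw [← hBeq]; exact hmono
    have hinv : (C ^ ((d : ℝ) / 2) * rexp (L / 2 * ‖a‖ ^ 2 / C))
        = (C ^ (-(d : ℝ) / 2) * rexp (-(L / 2) * ‖a‖ ^ 2 / C))⁻¹ := by
      rw [mul_inv, ← Real.exp_neg, ← Real.rpow_neg hC.le]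
      ring_nf
    rw [hinv, ← div_eq_mul_inv]
    gcongr
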